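/- Let φ : ℝⁿ → ℝ be C¹ with |∇φ(x)| ≥ b₁ > 0 for all x in an open set Ω, and let ‖∇φ‖ be uniformly continuous. Fix x₀ ∈ Ω with φ(x₀) = b, and let ν = -∇φ(x₀)/|∇φ(x₀)|. Then for every angle θ ∈ (0, π/2) there exists δ > 0 (depending only on b₁, θ, and the modulus of continuity of ∇φ) such that every x ∈ B_δ(x₀) ∩ Ω with ⟨x - x₀, ν⟩ ≥ cos(θ)·|x - x₀| satisfies φ(x) < b. -/

import Mathlib

open Metric Real
open scoped RealInnerProductSpace

/-- Lemma 2.6 (key step): interior cone condition for sublevel sets of a C¹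
function with uniformly non-vanishing, uniformly continuous gradient. -/
theorem stmt_0 {n : ℕ} (φ : EuclideanSpace ℝ (Fin n) → ℝ)
    (Ω : Set (EuclideanSpace ℝ (Fin n))) (hΩ : IsOpen Ω)
    (hφ : ContDiff ℝ 1 φ) (b₁ : ℝ) (hb₁ : 0 < b₁)
    (hgrad : ∀ x ∈ Ω, b₁ ≤ ‖gradient φ x‖)
    (huc : UniformContinuous (gradient φ))
    (x₀ : EuclideanSpace ℝ (Fin n)) (hx₀ : x₀ ∈ Ω) (b : ℝ) (hb : φ x₀ = b)
    (ν : EuclideanSpace ℝ (Fin n))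
    (hν : ν = -(‖gradient φ x₀‖⁻¹) • gradient φ x₀)
    (θ : ℝ) (hθ : θ ∈ Set.Ioo 0 (π / 2)) :
    ∃ δ > 0, ∀ x ∈ ball x₀ δ ∩ Ω, x ≠ x₀ →
      Real.cos θ * ‖x - x₀‖ ≤ ⟪x - x₀, ν⟫ → φ x < b := by
  set g := gradient φ x₀ with hg
  have hc : 0 < Real.cos θ := Real.cos_pos_of_mem_Ioo ⟨by linarith [hθ.1, Real.pi_pos], hθ.2⟩
  set ε := b₁ * Real.cos θ / 2 with hε
  have hεpos : 0 < ε := by positivity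
  obtain ⟨δ, hδpos, hδ⟩ := Metric.uniformContinuous_iff.mp huc ε hεpos
  refine ⟨δ, hδpos, ?_⟩
  rintro x ⟨hxb, hxΩ⟩ hne hcone
  have hgnorm : b₁ ≤ ‖g‖ := hgrad x₀ hx₀
  have hgpos : 0 < ‖g‖ := lt_of_lt_of_le hb₁ hgnorm
  have hxnorm : 0 < ‖x - x₀‖ := by
    simpa [norm_pos_iff, sub_eq_zero] using hne
  -- key derivative facts
  have hdiff : Differentiable ℝ φ := hφ.differentiable one_ne_zero
  -- mean value bound
  have hmb : ∀ z ∈ ball x₀ δ, ‖fderiv ℝ φ z - fderiv ℝ φ x₀‖ ≤ ε := by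
    intro z hz
    have : dist (gradient φ z) (gradient φ x₀) < ε := hδ (by simpa [dist_comm] using hz)
    rw [dist_eq_norm] at this
    have heq : ‖fderiv ℝ φ z - fderiv ℝ φ x₀‖ = ‖gradient φ z - gradient φ x₀‖ := by
      conv_rhs => rw [gradient, gradient, ← map_sub]
      rw [LinearIsometryEquiv.norm_map]
    rw [heq]; exact this.le
  have hmv : ‖φ x - φ x₀ - (fderiv ℝ φ x₀) (x - x₀)‖ ≤ ε * ‖x - x₀‖ :=
    (convex_ball x₀ δ).norm_image_sub_le_of_norm_hasFDerivWithin_le'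
      (fun z _ => (hdiff z).hasFDerivAt.hasFDerivWithinAt) hmb
      (mem_ball_self hδpos) hxb
  have hfd : (fderiv ℝ φ x₀) (x - x₀) = ⟪g, x - x₀⟫ := by

    rw [hg, gradient, ← InnerProductSpace.toDual_apply_apply,
      LinearIsometryEquiv.apply_symm_apply]
  -- cone condition
  have hinner : ⟪x - x₀, g⟫ ≤ -(b₁ * Real.cos θ * ‖x - x₀‖) := by
    have h1 : ⟪x - x₀, ν⟫ = -(‖g‖⁻¹) * ⟪x - x₀, g⟫ := by
      rw [hν, real_inner_smul_right]
    rw [h1] at hcone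
    have h2 : ‖g‖ * (Real.cos θ * ‖x - x₀‖) ≤ ‖g‖ * (-(‖g‖⁻¹) * ⟪x - x₀, g⟫) :=
      mul_le_mul_of_nonneg_left hcone hgpos.le
    have h3 : ‖g‖ * (-(‖g‖⁻¹) * ⟪x - x₀, g⟫) = -⟪x - x₀, g⟫ := by
      field_simp
    rw [h3] at h2
    nlinarith [mul_le_mul_of_nonneg_right hgnorm (by positivity : (0:ℝ) ≤ Real.cos θ * ‖x - x₀‖)]
  rw [hfd] at hmv
  have hupper : φ x - φ x₀ ≤ ⟪g, x - x₀⟫ + ε * ‖x - x₀‖ := by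
    have := (abs_le.mp (by rwa [Real.norm_eq_abs] at hmv)).2
    linarith
  have : φ x - φ x₀ < 0 := by
    rw [real_inner_comm] at hupper
    have : ε * ‖x - x₀‖ < b₁ * Real.cos θ * ‖x - x₀‖ := by
      rw [hε]; nlinarith
    linarith
  linarith [hb ▸ this]
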